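/- The function c : (0, π) → ℝ defined by c(x) = (1 − x·cot(x))/x is strictly increasing, satisfies c(x) → 0 as x → 0+, and c(π/2) = 2/π. Consequently, 1 − x·cot(x) ≤ (2/π)·x for all 0 < x ≤ π/2. -/

import Mathlib

open Real Set Filter

private lemma cot_hasDerivAt {x : ℝ} (hx : Real.sin x ≠ 0) :
    HasDerivAt Real.cot (-1 / Real.sin x ^ 2) x := by
  have h : HasDerivAt (fun y => Real.cos y / Real.sin y)
      ((-Real.sin x * Real.sin x - Real.cos x * Real.cos x) / Real.sin x ^ 2) x :=
    (Real.hasDerivAt_cos x).div (Real.hasDerivAt_sin x) hx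
  have hfun : Real.cot = fun y => Real.cos y / Real.sin y :=
    funext fun y => Real.cot_eq_cos_div_sin y
  rw [hfun]
  have hv : -Real.sin x * Real.sin x - Real.cos x * Real.cos x = -1 := by
    nlinarith [Real.sin_sq_add_cos_sq x]
  rw [hv] at h
  exact h

private lemma g_hasDerivAt {x : ℝ} (hx0 : x ≠ 0) (hs : Real.sin x ≠ 0) :
    HasDerivAt (fun y : ℝ => y⁻¹ - Real.cot y)
      (1 / Real.sin x ^ 2 - 1 / x ^ 2) x := by
  have h : HasDerivAt (fun y : ℝ => y⁻¹ - Real.cot y) _ x :=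
    (hasDerivAt_inv hx0).sub (cot_hasDerivAt hs)
  convert h using 1
  ring

private lemma eqOnThing : Set.EqOn (fun x : ℝ => (1 - x * Real.cot x) / x)
    (fun x : ℝ => x⁻¹ - Real.cot x) (Set.Ioo 0 Real.pi) := by
  intro x hx
  have hx0 : x ≠ 0 := ne_of_gt hx.1
  field_simp

private lemma smo : StrictMonoOn (fun x : ℝ => (1 - x * Real.cot x) / x)
    (Set.Ioo 0 Real.pi) := by
  have key : StrictMonoOn (fun x : ℝ => x⁻¹ - Real.cot x) (Set.Ioo 0 Real.pi) := by
    apply strictMonoOn_of_deriv_pos (convex_Ioo 0 Real.pi)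
    · intro x hx
      have hx0 : x ≠ 0 := ne_of_gt hx.1
      have hs : Real.sin x ≠ 0 := ne_of_gt (Real.sin_pos_of_pos_of_lt_pi hx.1 hx.2)
      exact ((g_hasDerivAt hx0 hs).continuousAt).continuousWithinAt
    · intro x hx
      rw [interior_Ioo] at hx
      have hx0 : x ≠ 0 := ne_of_gt hx.1
      have hsp : 0 < Real.sin x := Real.sin_pos_of_pos_of_lt_pi hx.1 hx.2
      rw [(g_hasDerivAt hx0 (ne_of_gt hsp)).deriv]
      have hslt : Real.sin x < x := Real.sin_lt hx.1
      have h1 : Real.sin x ^ 2 < x ^ 2 := by nlinarith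
      have h2 : (0:ℝ) < Real.sin x ^ 2 := by positivity
      have h3 : (0:ℝ) < x ^ 2 := by positivity
      have := one_div_lt_one_div_of_lt h2 h1
      linarith
  exact key.congr eqOnThing.symm

private lemma bounds {x : ℝ} (hx0 : 0 < x) (hx1 : x < 1) :
    0 ≤ (1 - x * Real.cot x) / x ∧ (1 - x * Real.cot x) / x ≤ x := by
  have hxpi : x < Real.pi / 2 := lt_of_lt_of_le hx1 (by linarith [Real.pi_gt_three])
  have hsp : 0 < Real.sin x := Real.sin_pos_of_pos_of_lt_pi hx0 (by linarith [Real.pi_gt_three])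
  have hcp : 0 < Real.cos x := Real.cos_pos_of_mem_Ioo ⟨by linarith [Real.pi_gt_three], hxpi⟩
  have hcot : Real.cot x = Real.cos x / Real.sin x := Real.cot_eq_cos_div_sin x
  -- lower bound: x < tan x gives x * cos x < sin x
  have htan := Real.lt_tan hx0 hxpi
  rw [Real.tan_eq_sin_div_cos] at htan
  have hxc : x * Real.cos x < Real.sin x := (lt_div_iff₀ hcp).mp htan
  constructor
  · apply div_nonneg _ hx0.le
    rw [hcot]
    have h5 : x * (Real.cos x / Real.sin x) ≤ 1 := by
      rw [mul_div_assoc', div_le_one hsp]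
      exact hxc.le
    linarith
  · rw [div_le_iff₀ hx0, hcot]
    -- need : 1 - x * (cos x / sin x) ≤ x ^ 2, i.e. sin x - x cos x ≤ x^2 sin x
    rw [sub_le_iff_le_add]
    have key : Real.sin x - x * Real.cos x ≤ x * x * Real.sin x := by
      have h1 : Real.sin x < x := Real.sin_lt hx0
      have h2 : 1 - x ^ 2 / 2 < Real.cos x := Real.one_sub_sq_div_two_lt_cos (ne_of_gt hx0)
      have h3 : x - x ^ 3 / 4 < Real.sin x := by
        linarith [Real.sin_gt_sub_cube hx0, show (0:ℝ) < x ^ 3 by positivity]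
      nlinarith
    have : x * (Real.cos x / Real.sin x) = x * Real.cos x / Real.sin x := by ring
    rw [this, ← sub_le_iff_le_add', le_div_iff₀ hsp]
    nlinarith [key]

private lemma tend : Filter.Tendsto (fun x : ℝ => (1 - x * Real.cot x) / x)
    (nhdsWithin 0 (Set.Ioi 0)) (nhds 0) := by
  have hmem : ∀ᶠ x in nhdsWithin (0:ℝ) (Set.Ioi 0), 0 < x ∧ x < 1 := by
    filter_upwards [Ioo_mem_nhdsGT (by norm_num : (0:ℝ) < 1)] with x hx
    exact ⟨hx.1, hx.2⟩
  apply tendsto_of_tendsto_of_tendsto_of_le_of_le' tendsto_const_nhds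
    (tendsto_nhdsWithin_of_tendsto_nhds (by simpa using Filter.tendsto_id))
  · filter_upwards [hmem] with x hx using (bounds hx.1 hx.2).1
  · filter_upwards [hmem] with x hx using (bounds hx.1 hx.2).2

/-- The function `c : (0, π) → ℝ`, `c x = (1 - x * cot x) / x`, is strictly
increasing, tends to `0` as `x → 0+`, and satisfies `c (π/2) = 2/π`.
Consequently, `1 - x * cot x ≤ (2/π) * x` for all `0 < x ≤ π/2`. -/
theorem one_sub_xcot_div :
    StrictMonoOn (fun x : ℝ => (1 - x * Real.cot x) / x) (Set.Ioo 0 Real.pi) ∧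
    Filter.Tendsto (fun x : ℝ => (1 - x * Real.cot x) / x)
      (nhdsWithin 0 (Set.Ioi 0)) (nhds 0) ∧
    (1 - Real.pi / 2 * Real.cot (Real.pi / 2)) / (Real.pi / 2) = 2 / Real.pi ∧
    ∀ x : ℝ, 0 < x → x ≤ Real.pi / 2 →
      1 - x * Real.cot x ≤ 2 / Real.pi * x := by
  have hpi := Real.pi_pos
  have hcothalf : Real.cot (Real.pi / 2) = 0 := by
    rw [Real.cot_eq_cos_div_sin, Real.cos_pi_div_two]
    simp
  have hval : (1 - Real.pi / 2 * Real.cot (Real.pi / 2)) / (Real.pi / 2) = 2 / Real.pi := by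
    rw [hcothalf]
    field_simp
    ring
  refine ⟨smo, tend, hval, ?_⟩
  intro x hx0 hx2
  have hxmem : x ∈ Set.Ioo 0 Real.pi := ⟨hx0, by linarith⟩
  have hpimem : Real.pi / 2 ∈ Set.Ioo 0 Real.pi := ⟨by linarith, by linarith⟩
  have := smo.monotoneOn hxmem hpimem hx2
  rw [hval] at this
  rw [div_le_iff₀ hx0] at this
  linarith [this]
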